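/- Fix n ≥ 1. Let p₀ = 1 + ∑_{k≥1} H^0_k z^{−k}; for 1 ≤ j ≤ n−1 let p_{2j} = z^{2j} + ∑_{k=0}^{j−1} H^{2j}_{−2k−1} z^{2k+1} + ∑_{k≥1} H^{2j}_k z^{−k}; and for j ≥ 2n let p_j = z^j + ∑_{k=0}^{n−1} H^j_{−2k−1} z^{2k+1} + ∑_{k≥1} H^j_k z^{−k}, with all H's complex. If the family {p₀, p₂, p₄, …, p_{2n−2}} ∪ {p_j : j ≥ 2n} is multiplicatively closed and z² p lies in its ℂ-linear span for every member p, then every even member is a pure power: p_{2m} = z^{2m} for all admissible m ≥ 0, and every odd member contains only odd powers of z: p_{2m+1} = z^{2m+1} + ∑_{k=0}^{n−1} H^{2m+1}_{−2k−1} z^{2k+1} + ∑_{k≥0} H^{2m+1}_{2k+1} z^{−(2k+1)} for all m ≥ n. -/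

import Mathlib

open Finset

noncomputable section

/-- `z^j` viewed as a formal Laurent series in `t = z⁻¹` (so `z^j = t^(-j)`). -/
def zp (j : ℤ) : LaurentSeries ℂ := HahnSeries.single (-j) 1

/-- The canonical-basis element
`z^j + ∑_{k=0}^{m-1} H^j_{-2k-1} z^(2k+1) + ∑_{k ≥ 1} H^j_k z^(-k)`
of a stratum of `Gr^(2)`. -/
def sigEl (H : ℕ → ℤ → ℂ) (j m : ℕ) : LaurentSeries ℂ :=
  zp j + ∑ k ∈ range m, H j (-(2*(k:ℤ)+1)) • zp (2*(k:ℤ)+1)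
    + HahnSeries.ofPowerSeries ℤ ℂ (PowerSeries.mk fun k => if 1 ≤ k then H j (k:ℤ) else 0)

/-- The `Σ_{2n}` family: `p₀` together with `p_{2j} (1 ≤ j ≤ n-1)` (each with `j` positive
odd-power terms) and `p_j (j ≥ 2n)` (each with `n` positive odd-power terms). -/
def sigma2nSet (H : ℕ → ℤ → ℂ) (n : ℕ) : Set (LaurentSeries ℂ) :=
  ((fun j => sigEl H (2*j) j) '' {j | j < n}) ∪ ((fun j => sigEl H j n) '' {j | 2*n ≤ j})

namespace SigAux

lemma zp_coeff (j e : ℤ) : (zp j).coeff e = if e = -j then 1 else 0 := by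
  rw [zp, HahnSeries.coeff_single]; split_ifs <;> simp_all

lemma zp_mul (a b : ℤ) : zp a * zp b = zp (a + b) := by
  simp [zp, HahnSeries.single_mul_single, neg_add]
  ring_nf

lemma ofPS_coeff (f : ℕ → ℂ) (e : ℤ) :
    (HahnSeries.ofPowerSeries ℤ ℂ (PowerSeries.mk f)).coeff e
      = if 0 ≤ e then f e.toNat else 0 := by
  rcases le_or_gt 0 e with he | he
  · obtain ⟨k, rfl⟩ := Int.eq_ofNat_of_zero_le he
    rw [if_pos he]
    have := HahnSeries.ofPowerSeries_apply_coeff (Γ := ℤ) (PowerSeries.mk f) k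
    simpa using this
  · rw [if_neg (not_le.mpr he), HahnSeries.ofPowerSeries_apply]
    apply HahnSeries.embDomain_notin_range
    rintro ⟨k, hk⟩
    change ((k:ℤ)) = e at hk
    omega

lemma sigEl_coeff (H : ℕ → ℤ → ℂ) (j m : ℕ) (e : ℤ) :
    (sigEl H j m).coeff e
      = (if e = -(j:ℤ) then 1 else 0)
        + (∑ k ∈ range m, if e = -(2*(k:ℤ)+1) then H j (-(2*(k:ℤ)+1)) else 0)
        + (if 1 ≤ e then H j e else 0) := by
  unfold sigEl
  rw [HahnSeries.coeff_add, HahnSeries.coeff_add]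
  congr 1
  · congr 1
    · exact zp_coeff _ _
    · rw [show (∑ k ∈ range m, H j (-(2*(k:ℤ)+1)) • zp (2*(k:ℤ)+1)).coeff e
            = (HahnSeries.coeff.addMonoidHom e) (∑ k ∈ range m,
                H j (-(2*(k:ℤ)+1)) • zp (2*(k:ℤ)+1)) from rfl, map_sum]
      refine Finset.sum_congr rfl fun k _ => ?_
      rw [HahnSeries.coeff.addMonoidHom_apply, HahnSeries.coeff_smul, zp_coeff,
        smul_eq_mul, mul_ite, mul_one, mul_zero]
  · rw [ofPS_coeff]
    rcases lt_trichotomy e 0 with h | h | h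
    · rw [if_neg (by omega), if_neg (by omega)]
    · subst h; simp
    · rw [if_pos (by omega), if_pos (by omega), if_pos (by omega)]
      congr 1
      omega

lemma sigEl_coeff_I (H : ℕ → ℤ → ℂ) {n : ℕ} (j : ℕ) {m : ℕ} (hm : m ≤ n) (i : ℕ)
    (hi : Even i ∨ 2*n ≤ i) :
    (sigEl H j m).coeff (-(i:ℤ)) = if i = j then 1 else 0 := by
  rw [sigEl_coeff]
  have h3 : ¬ (1 ≤ -(i:ℤ)) := by omega
  rw [if_neg h3, add_zero]
  have h2 : (∑ k ∈ range m, if -(i:ℤ) = -(2*(k:ℤ)+1) then H j (-(2*(k:ℤ)+1)) else 0) = 0 := by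
    refine Finset.sum_eq_zero fun k hk => ?_
    rw [Finset.mem_range] at hk
    rw [if_neg]
    intro h
    have hik : i = 2*k+1 := by omega
    rcases hi with ⟨r, hr⟩ | hle <;> omega
  rw [h2, add_zero]
  by_cases h : i = j
  · rw [if_pos (by omega), if_pos h]
  · rw [if_neg (by omega), if_neg h]

variable {H : ℕ → ℤ → ℂ} {n : ℕ}

lemma mem1 {a : ℕ} (ha : a < n) : sigEl H (2*a) a ∈ sigma2nSet H n :=
  Or.inl ⟨a, ha, rfl⟩

lemma mem2 {b : ℕ} (hb : 2*n ≤ b) : sigEl H b n ∈ sigma2nSet H n :=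
  Or.inr ⟨b, hb, rfl⟩

lemma mem_cases {s : LaurentSeries ℂ} (hs : s ∈ sigma2nSet H n) :
    (∃ a, a < n ∧ s = sigEl H (2*a) a) ∨ (∃ b, 2*n ≤ b ∧ s = sigEl H b n) := by
  rcases hs with ⟨a, ha, rfl⟩ | ⟨b, hb, rfl⟩
  · exact Or.inl ⟨a, ha, rfl⟩
  · exact Or.inr ⟨b, hb, rfl⟩

lemma key_pattern {s : LaurentSeries ℂ} (hs : s ∈ sigma2nSet H n) :
    ∃ j : ℕ, (Even j ∨ 2*n ≤ j) ∧
      (∀ i : ℕ, (Even i ∨ 2*n ≤ i) → s.coeff (-(i:ℤ)) = if i = j then 1 else 0) := by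
  rcases mem_cases hs with ⟨a, ha, rfl⟩ | ⟨b, hb, rfl⟩
  · exact ⟨2*a, Or.inl ⟨a, by ring⟩, fun i hi => sigEl_coeff_I H _ ha.le i hi⟩
  · exact ⟨b, Or.inr hb, fun i hi => sigEl_coeff_I H _ le_rfl i hi⟩

lemma uniq {s s' : LaurentSeries ℂ} (hs : s ∈ sigma2nSet H n) (hs' : s' ∈ sigma2nSet H n)
    {j : ℕ} (hj : Even j ∨ 2*n ≤ j)
    (h1 : s.coeff (-(j:ℤ)) ≠ 0) (h2 : s'.coeff (-(j:ℤ)) ≠ 0) : s = s' := by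
  rcases mem_cases hs with ⟨a, ha, rfl⟩ | ⟨b, hb, rfl⟩ <;>
    rcases mem_cases hs' with ⟨a', ha', rfl⟩ | ⟨b', hb', rfl⟩
  · rw [sigEl_coeff_I H _ ha.le j hj] at h1
    rw [sigEl_coeff_I H _ ha'.le j hj] at h2
    have e1 : j = 2*a := by by_contra hc; exact h1 (if_neg hc)
    have e2 : j = 2*a' := by by_contra hc; exact h2 (if_neg hc)
    have : a = a' := by omega
    subst this; rfl
  · rw [sigEl_coeff_I H _ ha.le j hj] at h1
    rw [sigEl_coeff_I H _ le_rfl j hj] at h2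
    have e1 : j = 2*a := by by_contra hc; exact h1 (if_neg hc)
    have e2 : j = b' := by by_contra hc; exact h2 (if_neg hc)
    omega
  · rw [sigEl_coeff_I H _ le_rfl j hj] at h1
    rw [sigEl_coeff_I H _ ha'.le j hj] at h2
    have e1 : j = b := by by_contra hc; exact h1 (if_neg hc)
    have e2 : j = 2*a' := by by_contra hc; exact h2 (if_neg hc)
    omega
  · rw [sigEl_coeff_I H _ le_rfl j hj] at h1
    rw [sigEl_coeff_I H _ le_rfl j hj] at h2
    have e1 : j = b := by by_contra hc; exact h1 (if_neg hc)
    have e2 : j = b' := by by_contra hc; exact h2 (if_neg hc)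
    subst e1; subst e2; rfl

lemma span_coeff_zero {x : LaurentSeries ℂ}
    (hx : x ∈ Submodule.span ℂ (sigma2nSet H n))
    (h0 : ∀ i : ℕ, (Even i ∨ 2*n ≤ i) → x.coeff (-(i:ℤ)) = 0) : x = 0 := by
  obtain ⟨c, hsupp, rfl⟩ := Submodule.mem_span_set.mp hx
  suffices hc : c = 0 by rw [hc]; simp
  ext s0
  rw [Finsupp.coe_zero, Pi.zero_apply]
  by_contra hne
  have hmem : s0 ∈ c.support := Finsupp.mem_support_iff.mpr hne
  have hs0 : s0 ∈ sigma2nSet H n := hsupp hmem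
  obtain ⟨j0, hj0c, hj0p⟩ := key_pattern hs0
  have hcoeff : (c.sum fun mi r => r • mi).coeff (-(j0:ℤ))
      = ∑ s ∈ c.support, c s * s.coeff (-(j0:ℤ)) := by
    rw [Finsupp.sum,
      show (∑ s ∈ c.support, c s • s).coeff (-(j0:ℤ))
        = (HahnSeries.coeff.addMonoidHom (-(j0:ℤ))) (∑ s ∈ c.support, c s • s) from rfl,
      map_sum]
    refine Finset.sum_congr rfl fun s _ => ?_
    rw [HahnSeries.coeff.addMonoidHom_apply, HahnSeries.coeff_smul, smul_eq_mul]
  have hzero := h0 j0 hj0c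
  rw [hcoeff] at hzero
  have hsum : (∑ s ∈ c.support, c s * s.coeff (-(j0:ℤ))) = c s0 := by
    rw [Finset.sum_eq_single s0]
    · rw [hj0p j0 hj0c, if_pos rfl, mul_one]
    · intro s hsmem hsne
      by_cases hz : s.coeff (-(j0:ℤ)) = 0
      · rw [hz, mul_zero]
      · exact absurd (uniq (hsupp hsmem) hs0 hj0c hz
          (by rw [hj0p j0 hj0c, if_pos rfl]; exact one_ne_zero)) hsne
    · intro h; exact absurd hmem h
  rw [hsum] at hzero
  exact hne hzero

lemma eq_of_diff {x y : LaurentSeries ℂ}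
    (hx : x ∈ Submodule.span ℂ (sigma2nSet H n))
    (hy : y ∈ Submodule.span ℂ (sigma2nSet H n))
    (h : ∀ i : ℕ, (Even i ∨ 2*n ≤ i) → x.coeff (-(i:ℤ)) = y.coeff (-(i:ℤ))) : x = y := by
  have := span_coeff_zero (sub_mem hx hy)
    (fun i hi => by rw [HahnSeries.coeff_sub, h i hi, sub_self])
  exact sub_eq_zero.mp this

lemma mul_coeff_eq_zero {x y : LaurentSeries ℂ} {e : ℤ}
    (h : ∀ a b : ℤ, a + b = e → x.coeff a = 0 ∨ y.coeff b = 0) : (x*y).coeff e = 0 := by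
  rw [HahnSeries.coeff_mul]
  refine Finset.sum_eq_zero fun ij hij => ?_
  rw [Finset.mem_addAntidiagonal] at hij
  rcases h ij.1 ij.2 hij.2.2 with h' | h' <;> rw [h'] <;> simp

lemma mul_coeff_bot {x y : LaurentSeries ℂ} {dx dy : ℤ}
    (hx : ∀ a, a < dx → x.coeff a = 0) (hy : ∀ b, b < dy → y.coeff b = 0)
    (hx0 : x.coeff dx ≠ 0) (hy0 : y.coeff dy ≠ 0) :
    (x*y).coeff (dx+dy) = x.coeff dx * y.coeff dy := by
  rw [HahnSeries.coeff_mul]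
  rw [Finset.sum_eq_single (dx, dy)]
  · intro ij hij hne
    rw [Finset.mem_addAntidiagonal] at hij
    rcases lt_trichotomy ij.1 dx with h | h | h
    · rw [hx _ h, zero_mul]
    · exfalso; apply hne
      have : ij.2 = dy := by have := hij.2.2; omega
      exact Prod.ext h this
    · have : ij.2 < dy := by have := hij.2.2; omega
      rw [hy _ this, mul_zero]
  · intro h
    exact absurd (Finset.mem_addAntidiagonal.mpr
      ⟨(HahnSeries.mem_support _ _).mpr hx0, (HahnSeries.mem_support _ _).mpr hy0, rfl⟩) h

/-- The substitution `z ↦ -z`. -/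
def sg (x : LaurentSeries ℂ) : LaurentSeries ℂ where
  coeff := fun e => (-1)^e * x.coeff e
  isPWO_support' := x.isPWO_support.mono (fun e he => by
    simp only [Function.mem_support, ne_eq] at he ⊢
    intro h; exact he (by rw [h, mul_zero]))

lemma sg_coeff (x : LaurentSeries ℂ) (e : ℤ) : (sg x).coeff e = (-1)^e * x.coeff e := rfl

lemma neg_one_zpow_ne (e : ℤ) : ((-1 : ℂ))^e ≠ 0 := zpow_ne_zero _ (by norm_num)

lemma sg_support (x : LaurentSeries ℂ) : (sg x).support = x.support := by
  ext e
  simp only [HahnSeries.mem_support, sg_coeff, ne_eq, mul_eq_zero, not_or]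
  exact ⟨fun h => h.2, fun h => ⟨neg_one_zpow_ne e, h⟩⟩

lemma sg_mul (x y : LaurentSeries ℂ) : sg (x * y) = sg x * sg y := by
  ext e
  rw [sg_coeff, HahnSeries.coeff_mul, HahnSeries.coeff_mul]
  have hA : Finset.antidiagonal (sg x).isPWO_support (sg y).isPWO_support e
      = Finset.antidiagonal x.isPWO_support y.isPWO_support e := by
    ext ij
    rw [Finset.mem_addAntidiagonal, Finset.mem_addAntidiagonal, sg_support, sg_support]
  rw [hA, Finset.mul_sum]
  refine Finset.sum_congr rfl fun ij hij => ?_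
  rw [Finset.mem_addAntidiagonal] at hij
  rw [sg_coeff, sg_coeff, ← hij.2.2, zpow_add₀ (by norm_num : (-1:ℂ) ≠ 0)]
  ring

lemma sg_even_one {e : ℤ} (he : Even e) : ((-1:ℂ))^e = 1 := he.neg_one_zpow

lemma sg_odd_neg {e : ℤ} (he : Odd e) : ((-1:ℂ))^e = -1 := he.neg_one_zpow

lemma sigEl_even_low (H : ℕ → ℤ → ℂ) {n j : ℕ} (hj : Odd j) {e : ℤ}
    (hee : Even e) (he : e ≤ 0) : (sigEl H j n).coeff e = 0 := by
  obtain ⟨u, hu⟩ := hj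
  obtain ⟨v, hv⟩ := hee
  rw [sigEl_coeff, if_neg (by omega), if_neg (by omega),
    Finset.sum_eq_zero (fun k _ => if_neg (by omega))]
  ring

lemma sigEl_low_low (H : ℕ → ℤ → ℂ) {n j : ℕ} (hj : 2*n+1 ≤ j) {e : ℤ}
    (he : e < -(j:ℤ)) : (sigEl H j n).coeff e = 0 := by
  rw [sigEl_coeff, if_neg (by omega), if_neg (by omega),
    Finset.sum_eq_zero (fun k hk => if_neg (by rw [Finset.mem_range] at hk; omega))]
  ring

lemma sigEl_top (H : ℕ → ℤ → ℂ) {n j : ℕ} (hj : 2*n+1 ≤ j) :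
    (sigEl H j n).coeff (-(j:ℤ)) = 1 := by
  rw [sigEl_coeff, if_pos rfl, if_neg (by omega),
    Finset.sum_eq_zero (fun k hk => if_neg (by rw [Finset.mem_range] at hk; omega))]
  ring

lemma sigEl_pos_coeff (H : ℕ → ℤ → ℂ) (n j : ℕ) {e : ℤ} (he : 1 ≤ e) :
    (sigEl H j n).coeff e = H j e := by
  rw [sigEl_coeff, if_neg (by omega), if_pos he,
    Finset.sum_eq_zero (fun k _ => if_neg (by omega))]
  ring

end SigAux

open SigAux in
/-- In a multiplicatively closed `Σ_{2n}` family all even elements are pure powers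
`p_{2m} = z^{2m}` and all odd elements contain only odd powers of `z`. -/
theorem sigma2n_parity (n : ℕ) (hn : 1 ≤ n) (H : ℕ → ℤ → ℂ)
    (hmul : ∀ x ∈ sigma2nSet H n, ∀ y ∈ sigma2nSet H n,
      x * y ∈ Submodule.span ℂ (sigma2nSet H n))
    (hz2 : ∀ x ∈ sigma2nSet H n, zp 2 * x ∈ Submodule.span ℂ (sigma2nSet H n)) :
    (∀ m : ℕ, m < n → sigEl H (2*m) m = zp (2*m)) ∧
    (∀ m : ℕ, n ≤ m → sigEl H (2*m) n = zp (2*m)) ∧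
    (∀ m : ℕ, n ≤ m →
      sigEl H (2*m+1) n
        = zp (2*m+1) + ∑ k ∈ range n, H (2*m+1) (-(2*(k:ℤ)+1)) • zp (2*(k:ℤ)+1)
          + HahnSeries.ofPowerSeries ℤ ℂ
              (PowerSeries.mk fun k => if Odd k then H (2*m+1) (k:ℤ) else 0)) := by
  classical
  -- ### Step 1 : p₀ = 1
  have hs0mem : sigEl H 0 0 ∈ sigma2nSet H n := by
    have := mem1 (H := H) (a := 0) (by omega : 0 < n)
    simpa using this
  have s0_low : ∀ e : ℤ, e < 0 → (sigEl H 0 0).coeff e = 0 := by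
    intro e he
    rw [sigEl_coeff, Finset.range_zero, Finset.sum_empty,
      if_neg (by omega), if_neg (by omega)]
    ring
  have s0_zero : (sigEl H 0 0).coeff 0 = 1 := by
    rw [sigEl_coeff, Finset.range_zero, Finset.sum_empty,
      if_pos (by omega), if_neg (by omega)]
    ring
  have hsq : sigEl H 0 0 * sigEl H 0 0 = sigEl H 0 0 := by
    apply eq_of_diff (hmul _ hs0mem _ hs0mem) (Submodule.subset_span hs0mem)
    intro i hi
    rcases Nat.eq_zero_or_pos i with rfl | hpos
    · have hb := mul_coeff_bot (x := sigEl H 0 0) (y := sigEl H 0 0)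
        (dx := (0:ℤ)) (dy := (0:ℤ)) s0_low s0_low
        (by rw [s0_zero]; exact one_ne_zero) (by rw [s0_zero]; exact one_ne_zero)
      rw [s0_zero, mul_one] at hb
      have h0 : (-(((0:ℕ)):ℤ)) = (0:ℤ) + (0:ℤ) := by norm_num
      rw [h0, hb]
      norm_num [s0_zero]
    · have hL : (sigEl H 0 0 * sigEl H 0 0).coeff (-(i:ℤ)) = 0 := by
        apply mul_coeff_eq_zero
        intro a b hab
        rcases lt_or_ge a 0 with h | h
        · exact Or.inl (s0_low a h)
        · exact Or.inr (s0_low b (by omega))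
      rw [hL, sigEl_coeff_I H _ (Nat.zero_le n) i hi, if_neg (by omega)]
  have hs0ne : sigEl H 0 0 ≠ 0 := by
    intro h
    rw [h, HahnSeries.coeff_zero] at s0_zero
    exact one_ne_zero s0_zero.symm
  have hp0 : sigEl H 0 0 = 1 := by
    have hfac : sigEl H 0 0 * (sigEl H 0 0 - 1) = 0 := by
      rw [mul_sub, hsq, mul_one, sub_self]
    rcases mul_eq_zero.mp hfac with h | h
    · exact absurd h hs0ne
    · exact sub_eq_zero.mp h
  -- ### Step 2 : all even members are pure powers
  have evens : ∀ m : ℕ, (m < n → sigEl H (2*m) m = zp (2*(m:ℤ))) ∧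
      (n ≤ m → sigEl H (2*m) n = zp (2*(m:ℤ))) := by
    intro m
    induction m with
    | zero =>
      refine ⟨fun _ => ?_, fun h => absurd h (by omega)⟩
      have h1 : (2*0 : ℕ) = 0 := rfl
      rw [h1, hp0]
      rw [show (2*((0:ℕ):ℤ)) = (0:ℤ) by norm_num, zp, neg_zero, HahnSeries.single_zero_one]
    | succ m ih =>
      have hzmem : zp (2*((m:ℤ)+1)) ∈ Submodule.span ℂ (sigma2nSet H n) := by
        rcases lt_or_ge m n with h | h
        · have := hz2 _ (mem1 h)
          rw [ih.1 h, zp_mul, show (2:ℤ) + 2*(m:ℤ) = 2*((m:ℤ)+1) by ring] at this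
          exact this
        · have := hz2 _ (mem2 (by omega : 2*n ≤ 2*m))
          rw [ih.2 h, zp_mul, show (2:ℤ) + 2*(m:ℤ) = 2*((m:ℤ)+1) by ring] at this
          exact this
      have hcast : (2*(((m+1):ℕ)):ℤ) = 2*((m:ℤ)+1) := by push_cast; ring
      constructor
      · intro hlt
        apply eq_of_diff (Submodule.subset_span (mem1 hlt)) (by rw [hcast]; exact hzmem)
        intro i hi
        rw [sigEl_coeff_I H _ hlt.le i hi, zp_coeff]
        by_cases h : i = 2*(m+1)
        · rw [if_pos h, if_pos (by omega)]
        · rw [if_neg h, if_neg (by omega)]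
      · intro hle
        apply eq_of_diff (Submodule.subset_span (mem2 (by omega : 2*n ≤ 2*(m+1))))
          (by rw [hcast]; exact hzmem)
        intro i hi
        rw [sigEl_coeff_I H _ le_rfl i hi, zp_coeff]
        by_cases h : i = 2*(m+1)
        · rw [if_pos h, if_pos (by omega)]
        · rw [if_neg h, if_neg (by omega)]
  have zp_even_mem : ∀ k : ℕ, zp (2*(k:ℤ)) ∈ Submodule.span ℂ (sigma2nSet H n) := by
    intro k
    rcases lt_or_ge k n with h | h
    · rw [← (evens k).1 h]; exact Submodule.subset_span (mem1 h)
    · rw [← (evens k).2 h]; exact Submodule.subset_span (mem2 (by omega))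
  -- ### Step 3 : base case, p_{2n+1} is odd
  have hbase : ∀ e : ℤ, Even e → (sigEl H (2*n+1) n).coeff e = 0 := by
    set r := sigEl H (2*n+1) n with hr
    have hrmem : r ∈ sigma2nSet H n := mem2 (by omega)
    have hlow : ∀ a : ℤ, a < -(2*(n:ℤ)+1) → r.coeff a = 0 := by
      intro a ha
      exact sigEl_low_low H (le_refl (2*n+1)) (by omega)
    have hevenlow : ∀ a : ℤ, Even a → a ≤ 0 → r.coeff a = 0 :=
      fun a h1 h2 => sigEl_even_low H ⟨n, by omega⟩ h1 h2
    have hOdd : ∀ i : ℕ, Odd i → 2*n ≤ i → (r*r).coeff (-(i:ℤ)) = 0 := by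
      intro i hoi hni
      obtain ⟨s, hs⟩ := hoi
      apply mul_coeff_eq_zero
      intro a b hab
      rcases le_or_gt 1 a with h1 | h1
      · exact Or.inr (hlow b (by omega))
      rcases le_or_gt 1 b with h2 | h2
      · exact Or.inl (hlow a (by omega))
      rcases Int.even_or_odd a with hea | hoa
      · exact Or.inl (hevenlow a hea (by omega))
      · obtain ⟨u, hu⟩ := hoa
        exact Or.inr (hevenlow b ⟨-(s:ℤ)-u-1, by omega⟩ (by omega))
    have hHigh : ∀ e : ℤ, e < -(4*(n:ℤ)+2) → (r*r).coeff e = 0 := by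
      intro e he
      apply mul_coeff_eq_zero
      intro a b hab
      rcases lt_or_ge a (-(2*(n:ℤ)+1)) with h | h
      · exact Or.inl (hlow a h)
      · exact Or.inr (hlow b (by omega))
    set E : LaurentSeries ℂ :=
      ∑ k ∈ range (2*n+2), ((r*r).coeff (-(2*(k:ℤ)))) • zp (2*(k:ℤ)) with hE
    have hEcoeff : ∀ e : ℤ, E.coeff e
        = ∑ k ∈ range (2*n+2),
            if e = -(2*(k:ℤ)) then (r*r).coeff (-(2*(k:ℤ))) else 0 := by
      intro e
      rw [hE, show (∑ k ∈ range (2*n+2), ((r*r).coeff (-(2*(k:ℤ)))) • zp (2*(k:ℤ))).coeff e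
          = (HahnSeries.coeff.addMonoidHom e) (∑ k ∈ range (2*n+2),
              ((r*r).coeff (-(2*(k:ℤ)))) • zp (2*(k:ℤ))) from rfl, map_sum]
      refine Finset.sum_congr rfl fun k _ => ?_
      rw [HahnSeries.coeff.addMonoidHom_apply, HahnSeries.coeff_smul, zp_coeff,
        smul_eq_mul, mul_ite, mul_one, mul_zero]
    have hEspan : E ∈ Submodule.span ℂ (sigma2nSet H n) :=
      Submodule.sum_mem _ fun k _ => Submodule.smul_mem _ _ (zp_even_mem k)
    have hEq : r * r = E := by
      apply eq_of_diff (hmul _ hrmem _ hrmem) hEspan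
      intro i hi
      rcases Nat.even_or_odd i with hie | hio
      · obtain ⟨k0, hk0⟩ := hie
        rw [hEcoeff]
        rcases lt_or_ge k0 (2*n+2) with hk | hk
        · rw [Finset.sum_eq_single k0]
          · rw [if_pos (by omega)]
            congr 1
            omega
          · intro k hkm hne
            exact if_neg (by omega)
          · intro h; exact absurd (Finset.mem_range.mpr hk) h
        · rw [Finset.sum_eq_zero (fun k hkm => if_neg
            (by rw [Finset.mem_range] at hkm; omega))]
          exact hHigh _ (by omega)
      · obtain ⟨s, hs⟩ := hio
        have hni : 2*n ≤ i := by
          rcases hi with ⟨u, hu⟩ | h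
          · omega
          · exact h
        rw [hOdd i ⟨s, hs⟩ hni, hEcoeff,
          Finset.sum_eq_zero (fun k _ => if_neg (by omega))]
    have hEsg : sg E = E := by
      ext e
      rw [sg_coeff]
      by_cases h : Even e
      · rw [sg_even_one h, one_mul]
      · have hz : E.coeff e = 0 := by
          rw [hEcoeff]
          refine Finset.sum_eq_zero fun k _ => if_neg fun hh => ?_
          exact h (by rw [hh]; exact ⟨-(k:ℤ), by ring⟩)
        rw [hz, mul_zero]
    have hsgsq : (sg r) * (sg r) = r * r := by
      calc (sg r) * (sg r) = sg (r*r) := (sg_mul r r).symm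
        _ = sg E := by rw [hEq]
        _ = E := hEsg
        _ = r * r := hEq.symm
    have hfactor : (r - sg r) * (r + sg r) = 0 := by
      have hexp : (r - sg r) * (r + sg r) = r*r - (sg r)*(sg r) := by ring
      rw [hexp, hsgsq, sub_self]
    rcases mul_eq_zero.mp hfactor with h | h
    · exfalso
      have h1 : r = sg r := sub_eq_zero.mp h
      have h2 : r.coeff (-((2*n+1 : ℕ):ℤ)) = 1 := sigEl_top H (le_refl (2*n+1))
      have h3 : (sg r).coeff (-((2*n+1 : ℕ):ℤ)) = -1 := by
        rw [sg_coeff, sg_odd_neg ⟨-(n:ℤ)-1, by push_cast; ring⟩, h2]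
        ring
      rw [← h1, h2] at h3
      norm_num at h3
    · intro e he
      have h2 : r.coeff e + (sg r).coeff e = 0 := by
        rw [← HahnSeries.coeff_add, h, HahnSeries.coeff_zero]
      rw [sg_coeff, sg_even_one he, one_mul] at h2
      exact add_self_eq_zero.mp h2
  -- ### Step 4 : induction, all odd members are odd
  have odd_all : ∀ m : ℕ, n ≤ m → ∀ e : ℤ, Even e → (sigEl H (2*m+1) n).coeff e = 0 := by
    intro m
    induction m with
    | zero => exact fun h => absurd h (by omega)
    | succ m ih =>
      intro hm
      rcases eq_or_lt_of_le hm with heq | hlt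
      · rw [show 2*(m+1)+1 = 2*n+1 by omega]
        exact hbase
      · have hnm : n ≤ m := by omega
        have IH := ih hnm
        set q := sigEl H (2*m+1) n with hq
        have hqmem : q ∈ sigma2nSet H n := mem2 (by omega)
        have hymem := hz2 q hqmem
        have y_coeff : ∀ e : ℤ, (zp 2 * q).coeff e = q.coeff (e+2) := by
          intro e
          have h := HahnSeries.coeff_single_mul_add (r := (1:ℂ)) (x := q)
            (a := e + 2) (b := (-2 : ℤ))
          rw [one_mul, show e + 2 + (-2 : ℤ) = e by ring] at h
          exact h
        set a0 := H (2*m+1) (-(2*(((n-1):ℕ):ℤ)+1)) with ha0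
        have hr0span : sigEl H (2*n+1) n ∈ Submodule.span ℂ (sigma2nSet H n) :=
          Submodule.subset_span (mem2 (by omega))
        have hq' : sigEl H (2*(m+1)+1) n = zp 2 * q - a0 • sigEl H (2*n+1) n := by
          apply eq_of_diff (Submodule.subset_span (mem2 (by omega)))
            (sub_mem hymem (Submodule.smul_mem _ _ hr0span))
          intro i hi
          rw [sigEl_coeff_I H _ le_rfl i hi, HahnSeries.coeff_sub, y_coeff,
            HahnSeries.coeff_smul, sigEl_coeff_I H _ le_rfl i hi, smul_eq_mul]
          rcases Nat.even_or_odd i with hie | hio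
          · obtain ⟨u, hu⟩ := hie
            rw [if_neg (by omega), if_neg (by omega), IH (-(i:ℤ)+2) ⟨1-(u:ℤ), by omega⟩]
            ring
          · obtain ⟨u, hu⟩ := hio
            have hni : 2*n ≤ i := by
              rcases hi with ⟨v, hv⟩ | h
              · omega
              · exact h
            rw [hq, sigEl_coeff, if_neg (show ¬(1:ℤ) ≤ -(i:ℤ)+2 by omega), add_zero]
            by_cases hcase : i = 2*n+1
            · rw [if_pos hcase,
                if_neg (show ¬ i = 2*(m+1)+1 by omega),
                if_neg (show ¬(-(i:ℤ)+2 = -(((2*m+1:ℕ)):ℤ)) by omega),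
                Finset.sum_eq_single (n-1)]
              · rw [if_pos (show -(i:ℤ)+2 = -(2*((((n-1)):ℕ):ℤ)+1) by omega), ha0]
                ring
              · intro k hk hkne
                rw [Finset.mem_range] at hk
                exact if_neg (by omega)
              · intro hmem
                exact absurd (Finset.mem_range.mpr (by omega)) hmem
            · rw [if_neg hcase, Finset.sum_eq_zero (fun k hk => if_neg
                (show ¬(-(i:ℤ)+2 = -(2*((k:ℕ):ℤ)+1)) by
                  rw [Finset.mem_range] at hk; omega)), mul_zero, sub_zero, add_zero]
              by_cases hcase2 : i = 2*(m+1)+1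
              · rw [if_pos hcase2, if_pos (show -(i:ℤ)+2 = -(((2*m+1:ℕ)):ℤ) by omega)]
              · rw [if_neg hcase2, if_neg (show ¬(-(i:ℤ)+2 = -(((2*m+1:ℕ)):ℤ)) by omega)]
        intro e he
        rw [hq', HahnSeries.coeff_sub, y_coeff, HahnSeries.coeff_smul,
          IH (e+2) (by obtain ⟨u, hu⟩ := he; exact ⟨u+1, by omega⟩), hbase e he,
          smul_eq_mul]
        ring
  -- ### Step 5 : assemble
  refine ⟨fun m hm => (evens m).1 hm, fun m hm => (evens m).2 hm, ?_⟩
  intro m hm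
  have hHzero : ∀ k : ℕ, 1 ≤ k → Even k → H (2*m+1) (k:ℤ) = 0 := by
    intro k h1 h2
    have hc := odd_all m hm (k:ℤ) (by obtain ⟨u, hu⟩ := h2; exact ⟨(u:ℤ), by omega⟩)
    rwa [sigEl_pos_coeff H n _ (by omega)] at hc
  have hzpc : zp ((2*m+1 : ℕ) : ℤ) = zp (2*(m:ℤ)+1) :=
    congrArg zp (by push_cast; ring)
  have hmk : (PowerSeries.mk fun k => if 1 ≤ k then H (2*m+1) (k:ℤ) else 0)
      = (PowerSeries.mk fun k => if Odd k then H (2*m+1) (k:ℤ) else 0) := by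
    ext k
    rw [PowerSeries.coeff_mk, PowerSeries.coeff_mk]
    rcases Nat.even_or_odd k with he | ho
    · rcases Nat.eq_zero_or_pos k with rfl | hk
      · rw [if_neg (by omega), if_neg (by simp [Nat.odd_iff])]
      · rw [if_pos (show 1 ≤ k from hk), if_neg (by rw [Nat.odd_iff]; rw [Nat.even_iff] at he; omega)]
        exact hHzero k hk he
    · rw [if_pos (by obtain ⟨u, hu⟩ := ho; omega), if_pos ho]
  show sigEl H (2*m+1) n = _
  rw [sigEl, hzpc, hmk]

end
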